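/- For any odd prime p and m ≥ 1, the map ℚ/ℤ → ℚ(ζ_{p^m})^× ⊗ ℚ/ℤ sending x to √(p*) ⊗ x is injective, where p* = (−1)^((p−1)/2) p and √(p*) is a square root of p* lying in ℚ(ζ_{p^m}). -/

import Mathlib

open TensorProduct Polynomial

section Aux

private lemma aux_tor {A : Type} [AddCommGroup A] (c : A)
    (h : (1:ℚ) ⊗ₜ[ℤ] c = (0 : ℚ ⊗[ℤ] A)) : ∃ k : ℤ, k ≠ 0 ∧ k • c = 0 := by
  have hbc : IsBaseChange ℚ (TensorProduct.mk ℤ ℚ A 1) := TensorProduct.isBaseChange ℤ A ℚ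
  have hlm : IsLocalizedModule (nonZeroDivisors ℤ) (TensorProduct.mk ℤ ℚ A 1) :=
    (isLocalizedModule_iff_isBaseChange (nonZeroDivisors ℤ) ℚ _).mpr hbc
  have h0 : (TensorProduct.mk ℤ ℚ A 1) c = 0 := h
  obtain ⟨s, hs⟩ := (IsLocalizedModule.eq_zero_iff (nonZeroDivisors ℤ) _).mp h0
  exact ⟨(s : ℤ), nonZeroDivisors.coe_ne_zero s, hs⟩

private lemma aux_extract {A : Type} [AddCommGroup A] (a : A) (q : ℕ) (hq : q ≠ 0)
    (h : a ⊗ₜ[ℤ] ((((q : ℚ)⁻¹ : ℚ) : AddCircle (1:ℚ))) = (0 : A ⊗[ℤ] AddCircle (1:ℚ))) :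
    ∃ (b : A) (k : ℤ), k ≠ 0 ∧ k • (a - q • b) = 0 := by
  classical
  set ι : ℤ →ₗ[ℤ] ℚ := (Int.castAddHom ℚ).toIntLinearMap with hι
  set π : ℚ →ₗ[ℤ] AddCircle (1:ℚ) :=
    (QuotientAddGroup.mk' (AddSubgroup.zmultiples (1:ℚ))).toIntLinearMap with hπ
  have hex : Function.Exact ι π := by
    intro y
    constructor
    · intro hy
      have : y ∈ AddSubgroup.zmultiples (1:ℚ) := by
        simpa [π, QuotientAddGroup.eq_zero_iff] using hy
      obtain ⟨n, hn⟩ := this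
      exact ⟨n, by simpa [ι] using hn⟩
    · rintro ⟨n, rfl⟩
      have : ι n ∈ AddSubgroup.zmultiples (1:ℚ) := ⟨n, by simp [ι]⟩
      simpa [π, QuotientAddGroup.eq_zero_iff] using this
  have hsurj : Function.Surjective π := QuotientAddGroup.mk'_surjective _
  have hexT := lTensor_exact (M := ℤ) (N := ℚ) (P := AddCircle (1:ℚ)) A hex hsurj
  have h' : (LinearMap.lTensor A π) (a ⊗ₜ[ℤ] ((q:ℚ)⁻¹)) = 0 := by
    rw [LinearMap.lTensor_tmul]; exact h
  obtain ⟨z, hz⟩ := (hexT _).mp h'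
  set b : A := (TensorProduct.rid ℤ A) z with hb
  have hzb : z = b ⊗ₜ[ℤ] (1:ℤ) := by
    rw [hb, ← TensorProduct.rid_symm_apply, LinearEquiv.symm_apply_apply]
  have heq : a ⊗ₜ[ℤ] ((q:ℚ)⁻¹) = b ⊗ₜ[ℤ] (1:ℚ) := by
    rw [← hz, hzb, LinearMap.lTensor_tmul]
    norm_num [ι]
  have heq1 : (a - q • b) ⊗ₜ[ℤ] (1:ℚ) = (0 : A ⊗[ℤ] ℚ) := by
    have h2 : (q:ℤ) • (a ⊗ₜ[ℤ] ((q:ℚ)⁻¹)) = a ⊗ₜ[ℤ] (1:ℚ) := by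
      rw [← TensorProduct.tmul_smul]
      congr 1
      have hq' : (q:ℚ) ≠ 0 := by exact_mod_cast hq
      rw [zsmul_eq_mul]
      push_cast
      field_simp
    rw [heq, TensorProduct.smul_tmul'] at h2
    rw [TensorProduct.sub_tmul, ← h2, show (q • b : A) = ((q:ℤ) • b : A) by simp, sub_self]
  have heq2 : (1:ℚ) ⊗ₜ[ℤ] (a - q • b) = (0 : ℚ ⊗[ℤ] A) := by
    have := congrArg (TensorProduct.comm ℤ A ℚ) heq1
    simpa using this
  obtain ⟨k, hk, hkc⟩ := aux_tor _ heq2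
  exact ⟨b, k, hk, hkc⟩

end Aux

private lemma aux_fixed {L : Type*} [Field L] [Algebra ℚ L] [FiniteDimensional ℚ L]
    [IsGalois ℚ L] (x : L) (hx : ∀ σ : L ≃ₐ[ℚ] L, σ x = x) :
    ∃ r : ℚ, algebraMap ℚ L r = x := by
  have h1 : IntermediateField.fixedField (⊤ : Subgroup (L ≃ₐ[ℚ] L)) = ⊥ := by
    rw [← IntermediateField.fixingSubgroup_bot (F := ℚ) (E := L)]
    exact IsGalois.fixedField_fixingSubgroup ⊥
  have h2 : x ∈ IntermediateField.fixedField (⊤ : Subgroup (L ≃ₐ[ℚ] L)) := fun σ => hx σ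
  rw [h1, IntermediateField.mem_bot] at h2
  obtain ⟨r, hr⟩ := h2
  exact ⟨r, hr⟩

private lemma aux_cong {L : Type*} [Field L] {ζ : L} {n : ℕ} [NeZero n]
    (hζ : IsPrimitiveRoot ζ n) {i j : ℕ} : ζ ^ i = ζ ^ j ↔ (i : ZMod n) = j := by
  have hpos : 0 < n := NeZero.pos n
  have hord := hζ.eq_orderOf
  have hmod : ∀ a : ℕ, ζ ^ (a % n) = ζ ^ a := by
    intro a
    conv_rhs => rw [← Nat.mod_add_div a n, pow_add, pow_mul, hζ.pow_eq_one, one_pow, mul_one]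
  rw [ZMod.natCast_eq_natCast_iff']
  constructor
  · intro h
    exact hζ.pow_inj (Nat.mod_lt _ hpos) (Nat.mod_lt _ hpos) (by rw [hmod, hmod, h])
  · intro h
    rw [← hmod i, ← hmod j, h]

private lemma lemA {L : Type*} [Field L] [Algebra ℚ L] [FiniteDimensional ℚ L] [IsGalois ℚ L]
    (hcomm : ∀ σ τ : L ≃ₐ[ℚ] L, ∀ x, σ (τ x) = τ (σ x))
    (q : ℕ) (hq : q.Prime) (hq2 : Odd q) (c : ℚ) (hc : c ≠ 0)
    (w : L) (hw : w ^ q = algebraMap ℚ L c) : ∃ r : ℚ, r ^ q = c := by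
  classical
  haveI : NeZero q := ⟨hq.ne_zero⟩
  haveI : Fact q.Prime := ⟨hq⟩
  have hinj : Function.Injective (algebraMap ℚ L) := (algebraMap ℚ L).injective
  have hw0 : w ≠ 0 := by
    intro h0
    apply hc
    apply hinj
    rw [map_zero, ← hw, h0, zero_pow hq.ne_zero]
  by_cases hfix : ∀ σ : L ≃ₐ[ℚ] L, σ w = w
  · obtain ⟨r, hr⟩ := aux_fixed w hfix
    refine ⟨r, hinj ?_⟩
    rw [map_pow, hr, hw]
  push_neg at hfix
  obtain ⟨σ₀, hσ₀⟩ := hfix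
  -- the primitive root
  have hwq : ∀ σ : L ≃ₐ[ℚ] L, (σ w) ^ q = w ^ q := by
    intro σ
    rw [← map_pow, hw, AlgEquiv.commutes]
  set ζ : L := σ₀ w / w with hζdef
  have hζq : ζ ^ q = 1 := by
    rw [hζdef, div_pow, hwq, div_self (pow_ne_zero _ hw0)]
  have hζ1 : ζ ≠ 1 := by
    intro h
    exact hσ₀ ((div_eq_one_iff_eq hw0).mp h)
  have horder : orderOf ζ = q := by
    have h1 : orderOf ζ ∣ q := orderOf_dvd_of_pow_eq_one hζq
    rcases (Nat.Prime.eq_one_or_self_of_dvd hq _ h1) with h | h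
    · exact absurd (orderOf_eq_one_iff.mp h) hζ1
    · exact h
  have hprim : IsPrimitiveRoot ζ q := by
    rw [← horder]
    exact IsPrimitiveRoot.orderOf ζ
  -- exponent data
  have hdata : ∀ σ : L ≃ₐ[ℚ] L, ∃ i : ℕ, σ w = w * ζ ^ i := by
    intro σ
    have hpow : (σ w / w) ^ q = 1 := by
      rw [div_pow, hwq, div_self (pow_ne_zero _ hw0)]
    obtain ⟨i, _, hi⟩ := hprim.eq_pow_of_pow_eq_one hpow
    exact ⟨i, by rw [hi]; field_simp⟩
  have hchi : ∀ σ : L ≃ₐ[ℚ] L, ∃ x : ℕ, σ ζ = ζ ^ x := by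
    intro σ
    have hpow : (σ ζ) ^ q = 1 := by rw [← map_pow, hζq, map_one]
    obtain ⟨x, _, hx⟩ := hprim.eq_pow_of_pow_eq_one hpow
    exact ⟨x, hx.symm⟩
  -- main relation
  have hrel : ∀ (σ τ : L ≃ₐ[ℚ] L) (cσ xσ cτ xτ : ℕ), σ w = w * ζ ^ cσ → σ ζ = ζ ^ xσ →
      τ w = w * ζ ^ cτ → τ ζ = ζ ^ xτ →
      ((cσ : ZMod q) + xσ * cτ = cτ + xτ * cσ) := by
    intro σ τ cσ xσ cτ xτ hcσ hxσ hcτ hxτ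
    have h1 : σ (τ w) = w * ζ ^ (cσ + xσ * cτ) := by
      rw [hcτ, map_mul, hcσ, map_pow, hxσ, ← pow_mul, pow_add, mul_assoc]
    have h2 : τ (σ w) = w * ζ ^ (cτ + xτ * cσ) := by
      rw [hcσ, map_mul, hcτ, map_pow, hxτ, ← pow_mul, pow_add, mul_assoc]
    have h3 : ζ ^ (cσ + xσ * cτ) = ζ ^ (cτ + xτ * cσ) := by
      have := hcomm σ τ w
      rw [h1, h2] at this
      exact mul_left_cancel₀ hw0 this
    have := (aux_cong hprim).mp h3
    push_cast at this
    convert this using 2 <;> push_cast <;> ring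
  by_cases hfix2 : ∀ σ : L ≃ₐ[ℚ] L, σ ζ = ζ
  · obtain ⟨r, hr⟩ := aux_fixed ζ hfix2
    have hr1 : r ^ q = 1 := by
      apply hinj
      rw [map_pow, hr, hζq, map_one]
    have : r = 1 := by
      have := (hq2.strictMono_pow (R := ℚ)).injective (a₁ := r) (a₂ := 1)
      simp only [one_pow] at this
      exact this hr1
    rw [this, map_one] at hr
    exact absurd hr.symm hζ1
  push_neg at hfix2
  obtain ⟨τ₀, hτ₀⟩ := hfix2
  obtain ⟨cτ, hcτ⟩ := hdata τ₀
  obtain ⟨xτ, hxτ⟩ := hchi τ₀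
  have hxτ1 : (xτ : ZMod q) ≠ 1 := by
    intro hx1
    apply hτ₀
    rw [hxτ]
    have : ζ ^ xτ = ζ ^ 1 := (aux_cong hprim).mpr (by rw [hx1]; norm_num)
    rw [this, pow_one]
  -- λ
  set lam : ZMod q := (cτ : ZMod q) * (1 - (xτ : ZMod q))⁻¹ with hlam
  have hkey : ∀ σ : L ≃ₐ[ℚ] L, ∀ cσ xσ : ℕ, σ w = w * ζ ^ cσ → σ ζ = ζ ^ xσ →
      (cσ : ZMod q) = lam * (1 - (xσ : ZMod q)) := by
    intro σ cσ xσ hcσ hxσ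
    have hr := hrel σ τ₀ cσ xσ cτ xτ hcσ hxσ hcτ hxτ
    have h1 : (cσ : ZMod q) * (1 - (xτ : ZMod q)) = (cτ : ZMod q) * (1 - (xσ : ZMod q)) := by
      linear_combination hr
    have hne : (1 - (xτ : ZMod q)) ≠ 0 := by
      intro h0
      apply hxτ1
      have : (xτ : ZMod q) = 1 := by linear_combination -h0
      exact this
    calc (cσ : ZMod q) = (cσ : ZMod q) * ((1 - (xτ:ZMod q)) * (1 - (xτ:ZMod q))⁻¹) := by
          rw [mul_inv_cancel₀ hne, mul_one]
      _ = ((cσ : ZMod q) * (1 - (xτ:ZMod q))) * (1 - (xτ:ZMod q))⁻¹ := by ring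
      _ = ((cτ : ZMod q) * (1 - (xσ:ZMod q))) * (1 - (xτ:ZMod q))⁻¹ := by rw [h1]
      _ = lam * (1 - (xσ:ZMod q)) := by rw [hlam]; ring
  set w' : L := w * ζ ^ (lam.val) with hw'
  have hfix3 : ∀ σ : L ≃ₐ[ℚ] L, σ w' = w' := by
    intro σ
    obtain ⟨cσ, hcσ⟩ := hdata σ
    obtain ⟨xσ, hxσ⟩ := hchi σ
    rw [hw', map_mul, hcσ, map_pow, hxσ, ← pow_mul, mul_assoc, ← pow_add]
    congr 1
    apply (aux_cong hprim).mpr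
    push_cast
    rw [ZMod.natCast_val, ZMod.cast_id]
    rw [hkey σ cσ xσ hcσ hxσ]
    ring
  obtain ⟨r, hr⟩ := aux_fixed w' hfix3
  refine ⟨r, hinj ?_⟩
  rw [map_pow, hr, hw', mul_pow, ← pow_mul, mul_comm lam.val q, pow_mul, hζq, one_pow, mul_one, hw]

private lemma lemA2 {L : Type*} [Field L] [Algebra ℚ L] [FiniteDimensional ℚ L] [IsGalois ℚ L]
    (hcomm : ∀ σ τ : L ≃ₐ[ℚ] L, ∀ x, σ (τ x) = τ (σ x))
    (c : ℚ) (hc : c ≠ 0) (w : L) (hw : w ^ 4 = algebraMap ℚ L c) :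
    ∃ u : ℚ, u ^ 2 = c ∨ u ^ 2 = -1 ∨ u ^ 2 = -c := by
  classical
  have hinj : Function.Injective (algebraMap ℚ L) := (algebraMap ℚ L).injective
  haveI : CharZero L := charZero_of_injective_algebraMap hinj
  have hw0 : w ≠ 0 := by
    intro h0
    apply hc
    apply hinj
    rw [map_zero, ← hw, h0]
    norm_num
  set s' : L := w ^ 2 with hs'def
  have hs'0 : s' ≠ 0 := pow_ne_zero _ hw0
  have hs2 : s' ^ 2 = algebraMap ℚ L c := by rw [hs'def, ← pow_mul]; exact hw
  have hwq : ∀ σ : L ≃ₐ[ℚ] L, (σ w) ^ 4 = w ^ 4 := by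
    intro σ
    rw [← map_pow, hw, AlgEquiv.commutes]
  have hs'q : ∀ σ : L ≃ₐ[ℚ] L, (σ s') ^ 2 = s' ^ 2 := by
    intro σ
    rw [← map_pow, hs2, AlgEquiv.commutes]
  by_cases hfix : ∀ σ : L ≃ₐ[ℚ] L, σ s' = s'
  · obtain ⟨u, hu⟩ := aux_fixed s' hfix
    refine ⟨u, Or.inl (hinj ?_)⟩
    rw [map_pow, hu, hs2]
  push_neg at hfix
  obtain ⟨σ₀, hσ₀⟩ := hfix
  have hσ₀s : σ₀ s' = -s' := by
    have h0 : (σ₀ s' - s') * (σ₀ s' + s') = 0 := by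
      have := hs'q σ₀
      ring_nf
      ring_nf at this
      linear_combination this
    rcases mul_eq_zero.mp h0 with h | h
    · exact absurd (sub_eq_zero.mp h) hσ₀
    · exact eq_neg_of_add_eq_zero_left h
  set i : L := σ₀ w / w with hidef
  have hi2 : i ^ 2 = -1 := by
    rw [hidef, div_pow]
    have : (σ₀ w) ^ 2 = σ₀ s' := by rw [hs'def, map_pow]
    rw [this, hσ₀s, hs'def]
    field_simp
  have hi4 : i ^ 4 = 1 := by
    rw [show (4:ℕ) = 2*2 by norm_num, pow_mul, hi2]
    ring
  have hi1 : i ≠ 1 := by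
    intro h
    rw [h] at hi2
    norm_num at hi2
  have hi2ne : i ^ 2 ≠ 1 := by rw [hi2]; intro h; norm_num at h
  have horder : orderOf i = 4 := by
    have h1 : orderOf i ∣ 4 := orderOf_dvd_of_pow_eq_one hi4
    have hle : orderOf i ≤ 4 := Nat.le_of_dvd (by norm_num) h1
    interval_cases h : orderOf i
    · simp at h1
    · exact absurd (orderOf_eq_one_iff.mp h) hi1
    · exact absurd (by rw [← h]; exact pow_orderOf_eq_one i) hi2ne
    · exact absurd h1 (by norm_num)
    · rfl
  have hprim : IsPrimitiveRoot i 4 := by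
    rw [← horder]
    exact IsPrimitiveRoot.orderOf i
  have hdata : ∀ σ : L ≃ₐ[ℚ] L, ∃ n : ℕ, σ w = w * i ^ n := by
    intro σ
    have hpow : (σ w / w) ^ 4 = 1 := by
      rw [div_pow, hwq, div_self (pow_ne_zero _ hw0)]
    obtain ⟨n, _, hn⟩ := hprim.eq_pow_of_pow_eq_one hpow
    exact ⟨n, by rw [hn]; field_simp⟩
  have hchi : ∀ σ : L ≃ₐ[ℚ] L, ∃ x : ℕ, σ i = i ^ x ∧ (2 * (x : ZMod 4) = 2) := by
    intro σ
    have hpow : (σ i) ^ 4 = 1 := by rw [← map_pow, hi4, map_one]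
    obtain ⟨x, _, hx⟩ := hprim.eq_pow_of_pow_eq_one hpow
    refine ⟨x, hx.symm, ?_⟩
    have h2 : (σ i) ^ 2 = i ^ 2 := by rw [← map_pow, hi2, map_neg, map_one]
    rw [← hx, ← pow_mul] at h2
    have := (aux_cong hprim).mp h2
    push_cast at this
    linear_combination this
  have hrel : ∀ (σ τ : L ≃ₐ[ℚ] L) (cσ xσ cτ xτ : ℕ), σ w = w * i ^ cσ → σ i = i ^ xσ →
      τ w = w * i ^ cτ → τ i = i ^ xτ →
      ((cσ : ZMod 4) + xσ * cτ = cτ + xτ * cσ) := by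
    intro σ τ cσ xσ cτ xτ hcσ hxσ hcτ hxτ
    have h1 : σ (τ w) = w * i ^ (cσ + xσ * cτ) := by
      rw [hcτ, map_mul, hcσ, map_pow, hxσ, ← pow_mul, pow_add, mul_assoc]
    have h2 : τ (σ w) = w * i ^ (cτ + xτ * cσ) := by
      rw [hcσ, map_mul, hcτ, map_pow, hxτ, ← pow_mul, pow_add, mul_assoc]
    have h3 : i ^ (cσ + xσ * cτ) = i ^ (cτ + xτ * cσ) := by
      have := hcomm σ τ w
      rw [h1, h2] at this
      exact mul_left_cancel₀ hw0 this
    have := (aux_cong hprim).mp h3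
    push_cast at this
    linear_combination this
  by_cases hfix2 : ∀ σ : L ≃ₐ[ℚ] L, σ i = i
  · obtain ⟨u, hu⟩ := aux_fixed i hfix2
    refine ⟨u, Or.inr (Or.inl (hinj ?_))⟩
    rw [map_pow, hu, hi2, map_neg, map_one]
  push_neg at hfix2
  obtain ⟨τ₀, hτ₀⟩ := hfix2
  obtain ⟨cτ, hcτ⟩ := hdata τ₀
  obtain ⟨xτ, hxτ, hxτ2⟩ := hchi τ₀
  have hxτ1 : (xτ : ZMod 4) ≠ 1 := by
    intro hx1
    apply hτ₀
    rw [hxτ]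
    have : i ^ xτ = i ^ 1 := (aux_cong hprim).mpr (by rw [hx1]; norm_num)
    rw [this, pow_one]
  have hxτ3 : (xτ : ZMod 4) = 3 := by
    have hd : ∀ z : ZMod 4, 2 * z = 2 → z ≠ 1 → z = 3 := by decide
    exact hd _ hxτ2 hxτ1
  -- σ₀ data
  have hc₀ : σ₀ w = w * i ^ 1 := by rw [pow_one, hidef]; field_simp
  obtain ⟨x₀, hx₀, hx₀2⟩ := hchi σ₀
  have h2cτ : 2 * (cτ : ZMod 4) = 2 := by
    have hR := hrel σ₀ τ₀ 1 x₀ cτ xτ hc₀ hx₀ hcτ hxτ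
    rw [hxτ3] at hR
    push_cast at hR
    have hd : ∀ x t : ZMod 4, 2 * x = 2 → (1 + x * t = t + 3 * 1) → 2 * t = 2 := by decide
    exact hd _ _ hx₀2 hR
  -- the invariant element
  set u : L := s' * i ^ 3 with hudef
  have hufix : ∀ σ : L ≃ₐ[ℚ] L, σ u = u := by
    intro σ
    obtain ⟨cσ, hcσ⟩ := hdata σ
    obtain ⟨xσ, hxσ, hxσ2⟩ := hchi σ
    have hRσ := hrel σ τ₀ cσ xσ cτ xτ hcσ hxσ hcτ hxτ
    rw [hxτ3] at hRσ
    have hσs' : σ s' = s' * i ^ (2 * cσ) := by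
      rw [hs'def, map_pow, hcσ, mul_pow, ← pow_mul, mul_comm cσ 2]
    rw [hudef, map_mul, hσs', map_pow, hxσ, ← pow_mul, mul_assoc, ← pow_add]
    congr 1
    apply (aux_cong hprim).mpr
    push_cast
    push_cast at hRσ
    have hd : ∀ a x t : ZMod 4, 2 * x = 2 → 2 * t = 2 → (a + x * t = t + 3 * a) →
        2 * a + x * 3 = 3 := by decide
    exact hd _ _ _ hxσ2 h2cτ hRσ
  obtain ⟨u₀, hu₀⟩ := aux_fixed u hufix
  refine ⟨u₀, Or.inr (Or.inr (hinj ?_))⟩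
  rw [map_pow, hu₀, hudef, mul_pow, map_neg, hs2, ← pow_mul]
  rw [show (3*2 : ℕ) = 4 + 2 by norm_num, pow_add, hi4, one_mul, hi2]
  ring


private lemma aux_no_root (p : ℕ) (hp : p.Prime) (q : ℕ) (hq : 2 ≤ q) (e : ℕ) (r : ℚ)
    (h : r ^ q = (-1 : ℚ) ^ e * p) : False := by
  haveI : Fact p.Prime := ⟨hp⟩
  have hp0 : (p : ℚ) ≠ 0 := Nat.cast_ne_zero.mpr hp.ne_zero
  have hrhs : ((-1 : ℚ) ^ e * p) ≠ 0 := mul_ne_zero (pow_ne_zero _ (by norm_num)) hp0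
  have hr0 : r ≠ 0 := by
    intro h0
    rw [h0, zero_pow (by omega)] at h
    exact hrhs h.symm
  have h1 : padicValRat p (r ^ q) = q * padicValRat p r := padicValRat.pow r
  have h2 : padicValRat p ((-1 : ℚ) ^ e * p) = 1 := by
    rw [padicValRat.mul (pow_ne_zero _ (by norm_num)) hp0]
    have he : padicValRat p ((-1 : ℚ) ^ e) = 0 := by
      rcases Nat.even_or_odd e with hpar | hpar
      · rw [hpar.neg_one_pow]; simp
      · rw [hpar.neg_one_pow, padicValRat.neg]; simp
    rw [he, zero_add, padicValRat.self hp.one_lt]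
  rw [h, h2] at h1
  have hdvd : (q : ℤ) ∣ 1 := ⟨padicValRat p r, h1⟩
  have := Int.le_of_dvd one_pos hdvd
  omega



set_option maxHeartbeats 2000000 in
/-- For an odd prime `p` and `m ≥ 1`, the map `ℚ/ℤ → ℚ(ζ_{p^m})ˣ ⊗ ℚ/ℤ`, `x ↦ √(p*) ⊗ x`,
is injective, where `p* = (-1)^((p-1)/2) p` and `√(p*) ∈ ℚ(ζ_{p^m})`. -/
theorem stmt_5 (p m : ℕ) (hp : p.Prime) (hodd : Odd p) (hm : 1 ≤ m)
    (K : Type) [Field K] [CharZero K]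
    [IsCyclotomicExtension {p ^ m} ℚ K]
    (s : Kˣ) (hs : (s : K) ^ 2 = algebraMap ℚ K ((-1) ^ ((p - 1) / 2) * p)) :
    Function.Injective (fun x : AddCircle (1 : ℚ) =>
      (Additive.ofMul s ⊗ₜ[ℤ] x : TensorProduct ℤ (Additive Kˣ) (AddCircle (1 : ℚ)))) := by
  classical
  set c : ℚ := (-1) ^ ((p - 1) / 2) * p with hcdef
  have hc : c ≠ 0 := mul_ne_zero (pow_ne_zero _ (by norm_num)) (Nat.cast_ne_zero.mpr hp.ne_zero)
  set a : Additive Kˣ := Additive.ofMul s with hadef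
  have hnd : ∀ r : ℚ, (r.den : ℚ) * r = (r.num : ℚ) := by
    intro r
    rw [mul_comm]
    exact_mod_cast Rat.mul_den_eq_num r
  have hker : ∀ x : AddCircle (1:ℚ),
      (a ⊗ₜ[ℤ] x : TensorProduct ℤ (Additive Kˣ) (AddCircle (1:ℚ))) = 0 → x = 0 := by
    intro x hx
    by_contra hx0
    -- x has finite order
    have hfin : IsOfFinAddOrder x := by
      obtain ⟨rx, rfl⟩ := QuotientAddGroup.mk'_surjective (AddSubgroup.zmultiples (1:ℚ)) x
      rw [isOfFinAddOrder_iff_nsmul_eq_zero]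
      refine ⟨rx.den, rx.pos, ?_⟩
      have h1 : ((rx.den • rx : ℚ) : AddCircle (1:ℚ)) = rx.den • ((rx : ℚ) : AddCircle (1:ℚ)) :=
        AddCircle.coe_nsmul (1:ℚ)
      rw [show (QuotientAddGroup.mk' (AddSubgroup.zmultiples (1:ℚ))) rx
        = ((rx : ℚ) : AddCircle (1:ℚ)) from rfl, ← h1]
      rw [AddCircle.coe_eq_zero_iff]
      refine ⟨rx.num, ?_⟩
      rw [zsmul_eq_mul, mul_one, nsmul_eq_mul]
      exact (hnd rx).symm
    set o : ℕ := addOrderOf x with hodef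
    have ho : o ≠ 0 := hfin.addOrderOf_pos.ne'
    have ho1 : o ≠ 1 := by
      intro h1
      exact hx0 (AddMonoid.addOrderOf_eq_one_iff.mp h1)
    set q : ℕ := o.minFac with hqdef
    have hqp : q.Prime := Nat.minFac_prime ho1
    set y : AddCircle (1:ℚ) := (o / q) • x with hydef
    have hy0 : y ≠ 0 := by
      intro h0
      have hdvd : o ∣ o / q := addOrderOf_dvd_iff_nsmul_eq_zero.mpr h0
      have h1 : o / q < o := Nat.div_lt_self (Nat.pos_of_ne_zero ho) hqp.one_lt
      have h2 : 0 < o / q :=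
        Nat.div_pos (Nat.minFac_le (Nat.pos_of_ne_zero ho)) hqp.pos
      exact absurd (Nat.le_of_dvd h2 hdvd) (not_le.mpr h1)
    have hqy : q • y = 0 := by
      rw [hydef, smul_smul, Nat.mul_div_cancel' (Nat.minFac_dvd o)]
      exact addOrderOf_nsmul_eq_zero x
    have hty : (a ⊗ₜ[ℤ] y : TensorProduct ℤ (Additive Kˣ) (AddCircle (1:ℚ))) = 0 := by
      rw [hydef, show ((o / q) • x) = (((o / q : ℕ) : ℤ) • x) from (natCast_zsmul x _).symm,
        TensorProduct.tmul_smul, hx, smul_zero]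
    -- describe y
    obtain ⟨ry, hry⟩ := QuotientAddGroup.mk'_surjective (AddSubgroup.zmultiples (1:ℚ)) y
    have hry' : ((ry : ℚ) : AddCircle (1:ℚ)) = y := hry
    obtain ⟨zz, hzz⟩ : ∃ n : ℤ, n • (1:ℚ) = q • ry := by
      rw [← AddCircle.coe_eq_zero_iff (1:ℚ), AddCircle.coe_nsmul (1:ℚ), hry', hqy]
    have hzz' : (zz : ℚ) = q * ry := by
      have h := hzz
      rw [zsmul_eq_mul, mul_one, nsmul_eq_mul] at h
      exact_mod_cast h
    have hden : ry.den ∣ q := by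
      have hq0 : (q : ℚ) ≠ 0 := Nat.cast_ne_zero.mpr hqp.ne_zero
      have h1 : ry = Rat.divInt zz q := by
        rw [Rat.divInt_eq_div, hzz']
        push_cast
        field_simp
      have h2 : ((ry.den : ℤ)) ∣ (q : ℤ) := by
        rw [h1]
        exact Rat.den_dvd zz q
      exact_mod_cast h2
    have hdenq : ry.den = q := by
      rcases (Nat.Prime.eq_one_or_self_of_dvd hqp _ hden) with h1 | h1
      · exfalso
        apply hy0
        rw [← hry']
        have : ry = (ry.num : ℚ) := by
          conv_lhs => rw [← Rat.num_div_den ry]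
          rw [h1]
          norm_num
        rw [this, AddCircle.coe_eq_zero_iff]
        exact ⟨ry.num, by rw [zsmul_eq_mul, mul_one]⟩
      · exact h1
    -- Bezout
    have hcop : IsCoprime (ry.num) (q : ℤ) := by
      rw [Int.isCoprime_iff_gcd_eq_one]
      have := ry.reduced
      rw [← hdenq]
      exact this
    obtain ⟨u, v, huv⟩ := hcop
    have hkey : (a ⊗ₜ[ℤ] (((q:ℚ)⁻¹ : ℚ) : AddCircle (1:ℚ)) :
        TensorProduct ℤ (Additive Kˣ) (AddCircle (1:ℚ))) = 0 := by
      have h2 : (((q:ℚ)⁻¹ : ℚ) : AddCircle (1:ℚ)) = u • y := by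
        rw [← hry', show u • (((ry : ℚ)) : AddCircle (1:ℚ)) = ((u • ry : ℚ) : AddCircle (1:ℚ))
          from (AddCircle.coe_zsmul (1:ℚ)).symm]
        rw [QuotientAddGroup.eq]
        refine ⟨-v, ?_⟩
        have hq0 : (q : ℚ) ≠ 0 := Nat.cast_ne_zero.mpr hqp.ne_zero
        have hnum : (ry.num : ℚ) = q * ry := by
          rw [← hnd ry, hdenq]
        have huv' : (u : ℚ) * ry.num + v * q = 1 := by exact_mod_cast huv
        rw [hnum] at huv'
        show (-v) • (1:ℚ) = -((q:ℚ))⁻¹ + u • ry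
        rw [zsmul_eq_mul, mul_one, zsmul_eq_mul]
        have h3 : ((-v : ℤ):ℚ) * q = (-((q:ℚ))⁻¹ + u * ry) * q := by
          rw [add_mul, neg_mul, inv_mul_cancel₀ hq0]
          push_cast
          linarith [huv']
        have h4 := mul_right_cancel₀ hq0 h3
        push_cast at h4 ⊢
        linarith [h4]
      rw [h2, TensorProduct.tmul_smul, hty, smul_zero]
    -- extraction
    obtain ⟨b, k, hk, hkrel⟩ := aux_extract a q hqp.ne_zero hkey
    -- multiplicative translation
    set t : Kˣ := Additive.toMul b with htdef
    have hmul : (s / t ^ q) ^ k = (1 : Kˣ) := by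
      have h1 := congrArg Additive.toMul hkrel
      rw [toMul_zsmul, toMul_sub, toMul_nsmul, toMul_zero] at h1
      simpa [hadef, htdef] using h1
    set k' : ℕ := k.natAbs with hk'def
    have hk'0 : k' ≠ 0 := Int.natAbs_ne_zero.mpr hk
    have hζk : (s / t ^ q) ^ k' = (1 : Kˣ) := by
      rcases Int.natAbs_eq k with he | he
      · rw [← zpow_natCast, ← he, hmul]
      · rw [← zpow_natCast, show ((k' : ℤ)) = -k by omega, zpow_neg, hmul, inv_one]
    -- the big cyclotomic field
    set B : ℕ := p ^ m * (k' * q) with hBdef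
    have hk'pos : 0 < k' := Nat.pos_of_ne_zero hk'0
    have hBpos : 0 < B := by
      have h1 := hp.pos
      have h2 := hqp.pos
      positivity
    set Bp : ℕ+ := ⟨B, hBpos⟩ with hBpdef
    set L := CyclotomicField Bp ℚ with hLdef
    haveI : IsCyclotomicExtension {(Bp:ℕ)} ℚ L := by
      haveI : NeZero (Bp:ℕ) := ⟨Bp.ne_zero⟩
      haveI : NeZero ((Bp:ℕ):ℚ) := ⟨by exact_mod_cast Bp.ne_zero⟩
      exact CyclotomicField.isCyclotomicExtension (n := (Bp:ℕ)) (K := ℚ)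
    haveI hfd : FiniteDimensional ℚ L := IsCyclotomicExtension.finiteDimensional {(Bp:ℕ)} ℚ L
    haveI hgal : IsGalois ℚ L := IsCyclotomicExtension.isGalois {(Bp:ℕ)} ℚ L
    have hirr : Irreducible (cyclotomic ((Bp : ℕ+) : ℕ) ℚ) := cyclotomic.irreducible_rat Bp.pos
    have hcomm : ∀ σ τ : L ≃ₐ[ℚ] L, ∀ xx : L, σ (τ xx) = τ (σ xx) := by
      intro σ τ xx
      have hmc : σ * τ = τ * σ := by
        apply (IsCyclotomicExtension.autEquivPow L hirr).injective
        rw [map_mul, map_mul, mul_comm]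
      have := congrArg (fun ρ : L ≃ₐ[ℚ] L => ρ xx) hmc
      simpa using this
    obtain ⟨η, hη⟩ := IsCyclotomicExtension.exists_isPrimitiveRoot ℚ L (S := {(Bp:ℕ)}) rfl Bp.ne_zero
    have hη' : IsPrimitiveRoot η B := hη
    have hδ : IsPrimitiveRoot (η ^ (k' * q)) (p ^ m) := hη'.pow hBpos (by rw [hBdef]; ring)
    -- the embedding
    set n₀ : ℕ+ := ⟨p ^ m, pow_pos hp.pos m⟩ with hn₀def
    haveI : IsCyclotomicExtension {((n₀ : ℕ+) : ℕ)} ℚ K := ‹IsCyclotomicExtension {p ^ m} ℚ K›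
    haveI hsf := IsCyclotomicExtension.isSplittingField_X_pow_sub_one ((n₀ : ℕ+) : ℕ) ℚ K
    have hsplit : Splits (Polynomial.map (algebraMap ℚ L) ((X : ℚ[X]) ^ ((n₀ : ℕ+) : ℕ) - 1)) := by
      have hmap : Polynomial.map (algebraMap ℚ L) ((X : ℚ[X]) ^ ((n₀ : ℕ+) : ℕ) - 1)
          = (X : L[X]) ^ ((n₀ : ℕ+) : ℕ) - 1 := by
        simp
      rw [hmap]
      have hn₀ : ((n₀ : ℕ+) : ℕ) = p ^ m := rfl
      rw [hn₀]
      have := X_pow_sub_one_splits hδ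
      rwa [C_1] at this
    set φ : K →ₐ[ℚ] L := IsSplittingField.lift K ((X : ℚ[X]) ^ ((n₀ : ℕ+) : ℕ) - 1) hsplit
      with hφdef
    have hφinj : Function.Injective φ := φ.toRingHom.injective
    set sL : L := φ (s : K) with hsLdef
    set tL : L := φ (t : K) with htLdef
    have hsL2 : sL ^ 2 = algebraMap ℚ L c := by
      rw [hsLdef, ← map_pow, hs]
      exact φ.commutes c
    have hζL : (sL / tL ^ q) ^ k' = 1 := by
      have h1 : ((s / t ^ q : Kˣ) : K) ^ k' = 1 := by
        rw [← Units.val_pow_eq_pow_val, hζk, Units.val_one]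
      have h2 : ((s / t ^ q : Kˣ) : K) = (s : K) / (t : K) ^ q := by
        push_cast
        ring
      rw [h2] at h1
      have h3 := congrArg φ h1
      rw [map_one, map_pow, map_div₀, map_pow] at h3
      exact h3
    have htL0 : tL ≠ 0 := by
      rw [htLdef]
      exact (map_ne_zero_iff φ.toRingHom hφinj).mpr (Units.ne_zero t)
    haveI : NeZero k' := ⟨hk'0⟩
    have hθ : IsPrimitiveRoot (η ^ (p ^ m)) (k' * q) := hη'.pow hBpos hBdef
    have hθq : IsPrimitiveRoot ((η ^ (p ^ m)) ^ q) k' :=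
      hθ.pow (Nat.mul_pos hk'pos hqp.pos) (mul_comm k' q)
    obtain ⟨iEx, _, hiEx⟩ := hθq.eq_pow_of_pow_eq_one hζL
    set ξ : L := ((η ^ (p ^ m)) ^ iEx) with hξdef
    have hξq : ξ ^ q = sL / tL ^ q := by
      rw [hξdef, ← pow_mul, mul_comm iEx q, pow_mul, hiEx]
    have hfact : sL = (ξ * tL) ^ q := by
      rw [mul_pow, hξq]
      rw [div_mul_cancel₀ _ (pow_ne_zero _ htL0)]
    rcases eq_or_ne q 2 with hq2 | hq2
    · have hw4 : (ξ * tL) ^ 4 = algebraMap ℚ L c := by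
        have h4 : (ξ * tL) ^ 4 = ((ξ * tL) ^ q) ^ 2 := by rw [hq2]; ring
        rw [h4, ← hfact, hsL2]
      obtain ⟨u, hu⟩ := lemA2 hcomm c hc _ hw4
      rcases hu with h | h | h
      · apply aux_no_root p hp 2 le_rfl ((p-1)/2) u
        rw [h, hcdef]
      · nlinarith [sq_nonneg u, h]
      · apply aux_no_root p hp 2 le_rfl ((p-1)/2 + 1) u
        rw [h, hcdef]
        ring
    · have hoddq : Odd q := hqp.odd_of_ne_two hq2
      have hwq : ((ξ * tL) ^ 2) ^ q = algebraMap ℚ L c := by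
        rw [← pow_mul, mul_comm 2 q, pow_mul, ← hfact, hsL2]
      obtain ⟨r, hr⟩ := lemA hcomm q hqp hoddq c hc _ hwq
      apply aux_no_root p hp q hqp.two_le ((p-1)/2) r
      rw [hr, hcdef]
  intro x y hxy
  have h0 : (a ⊗ₜ[ℤ] (x - y) : TensorProduct ℤ (Additive Kˣ) (AddCircle (1:ℚ))) = 0 := by
    rw [TensorProduct.tmul_sub]
    have hxy' : (a ⊗ₜ[ℤ] x : TensorProduct ℤ (Additive Kˣ) (AddCircle (1:ℚ))) = a ⊗ₜ[ℤ] y := hxy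
    rw [hxy', sub_self]
  exact sub_eq_zero.mp (hker _ h0)
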